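/- Let P_n, P be probability measures on ℤ≥0 × [0,1], and let K be a probability kernel from ℤ≥0 × [0,1] into ℤ≥0 such that for every x, t ∈ ℤ≥0 the map y ↦ K((x,y), {t}) is continuous on [0,1]. If P_n → P weakly, then P_nK → PK weakly, where PK is the probability measure on ℤ≥0 defined by PK(A) = ∫ K((x,y), A) P(dx,dy). -/

import Mathlib

open MeasureTheory Filter ProbabilityTheory
open scoped Topology

noncomputable section

/-- **Lemma (weak convergence through a kernel).**
Let `P_n, P` be probability measures on `ℤ≥0 × [0,1]` and let `K` be a probability
kernel from `ℤ≥0 × [0,1]` into `ℤ≥0` such that `y ↦ K((x,y), {t})` is continuous for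
all `x, t`. If `P_n → P` weakly, then `P_n K → P K` weakly (on the discrete space
`ℤ≥0`, tested against bounded functions). -/
theorem kernel_weak_convergence
    (Pn : ℕ → Measure (ℕ × ↥(Set.Icc (0 : ℝ) 1))) (P : Measure (ℕ × ↥(Set.Icc (0 : ℝ) 1)))
    (hPn : ∀ n, IsProbabilityMeasure (Pn n)) (hP : IsProbabilityMeasure P)
    (K : Kernel (ℕ × ↥(Set.Icc (0 : ℝ) 1)) ℕ) [IsMarkovKernel K]
    (hK : ∀ (x : ℕ) (t : ℕ),
      Continuous fun y : ↥(Set.Icc (0 : ℝ) 1) => (K (x, y) {t}).toReal)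
    (hweak : ∀ φ : ℕ × ↥(Set.Icc (0 : ℝ) 1) → ℝ, Continuous φ → (∃ C, ∀ z, |φ z| ≤ C) →
      Tendsto (fun n => ∫ z, φ z ∂(Pn n)) atTop (𝓝 (∫ z, φ z ∂P))) :
    ∀ φ : ℕ → ℝ, (∃ C, ∀ t, |φ t| ≤ C) →
      Tendsto (fun n => ∫ t, φ t ∂((Pn n).bind fun z => K z)) atTop
        (𝓝 (∫ t, φ t ∂(P.bind fun z => K z))) := by
  intro φ hφbound
  haveI := hP
  haveI := fun n => hPn n
  obtain ⟨C₀, hC₀⟩ := hφbound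
  set Y := ↥(Set.Icc (0 : ℝ) 1)
  set C : ℝ := max C₀ 0 with hCdef
  have hCnn : (0 : ℝ) ≤ C := le_max_right _ _
  have hφC : ∀ t, |φ t| ≤ C := fun t => (hC₀ t).trans (le_max_left _ _)
  -- continuity of the test functions `z ↦ K z {t}`
  have hcont : ∀ t : ℕ, Continuous fun z : ℕ × Y => (K z {t}).toReal := by
    intro t
    rw [continuous_iff_continuousAt]
    rintro ⟨x, y⟩
    have h1 : ContinuousAt (fun z : ℕ × Y => (K (x, z.2) {t}).toReal) (x, y) :=
      ((hK x t).comp continuous_snd).continuousAt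
    refine h1.congr ?_
    have hmem : (Prod.fst ⁻¹' {x} : Set (ℕ × Y)) ∈ 𝓝 ((x, y) : ℕ × Y) :=
      (IsOpen.preimage continuous_fst (isOpen_discrete ({x} : Set ℕ))).mem_nhds rfl
    filter_upwards [hmem] with p hp
    have hp1 : p.1 = x := hp
    rw [← hp1]
  -- the key identity
  have key : ∀ (μ : Measure (ℕ × Y)) (t : ℕ),
      ((μ.bind fun z => K z) {t}).toReal = ∫ z, (K z {t}).toReal ∂μ := by
    intro μ t
    rw [Measure.bind_apply (measurableSet_singleton t) (Kernel.measurable K).aemeasurable]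
    exact (integral_toReal ((Kernel.measurable_coe K (measurableSet_singleton t)).aemeasurable)
      (Filter.Eventually.of_forall fun z => measure_lt_top _ _)).symm
  -- the bind measures are probability measures
  have hprob : ∀ (μ : Measure (ℕ × Y)), IsProbabilityMeasure μ →
      IsProbabilityMeasure (μ.bind fun z => K z) := by
    intro μ hμ
    constructor
    rw [Measure.bind_apply MeasurableSet.univ (Kernel.measurable K).aemeasurable]
    simp [measure_univ]
  haveI hQ : IsProbabilityMeasure (P.bind fun z => K z) := hprob P hP
  haveI hQn : ∀ n, IsProbabilityMeasure ((Pn n).bind fun z => K z) := fun n => hprob _ (hPn n)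
  -- point masses
  set A : ℕ → ℕ → ℝ := fun n t => (((Pn n).bind fun z => K z) {t}).toReal with hAdef
  set a : ℕ → ℝ := fun t => ((P.bind fun z => K z) {t}).toReal with hadef
  have hAnn : ∀ n t, 0 ≤ A n t := fun n t => ENNReal.toReal_nonneg
  have hann : ∀ t, 0 ≤ a t := fun t => ENNReal.toReal_nonneg
  -- mass identities
  have hmass : ∀ (ν : Measure ℕ), IsProbabilityMeasure ν →
      (Summable fun t => (ν {t}).toReal) ∧ (∑' t, (ν {t}).toReal) = 1 := by
    intro ν hν
    have h1 : (∑' t : ℕ, ν {t}) = 1 := by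
      have := (measure_iUnion (μ := ν) (f := fun t : ℕ => ({t} : Set ℕ))
        (fun i j hij => by simp [Function.onFun, Set.disjoint_singleton, hij])
        (fun i => measurableSet_singleton i)).symm
      rw [this, Set.iUnion_of_singleton, measure_univ]
    constructor
    · exact ENNReal.summable_toReal (by rw [h1]; exact ENNReal.one_ne_top)
    · rw [← ENNReal.tsum_toReal_eq (fun t => measure_ne_top _ _), h1, ENNReal.toReal_one]
  have hAsum : ∀ n, Summable (A n) := fun n => (hmass _ (hQn n)).1
  have hAone : ∀ n, (∑' t, A n t) = 1 := fun n => (hmass _ (hQn n)).2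
  have hasum : Summable a := (hmass _ hQ).1
  have haone : (∑' t, a t) = 1 := (hmass _ hQ).2
  -- integrals as tsums
  have hint : ∀ (ν : Measure ℕ), IsProbabilityMeasure ν →
      (∫ t, φ t ∂ν) = ∑' t, (ν {t}).toReal * φ t := by
    intro ν hν
    have hInt : Integrable φ ν := by
      refine ⟨(measurable_of_countable φ).aestronglyMeasurable, ?_⟩
      exact HasFiniteIntegral.of_bounded (C := C)
        (Filter.Eventually.of_forall fun t => hφC t)
    rw [integral_countable' hInt]
    simp [smul_eq_mul]
    rfl
  -- pointwise convergence of masses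
  have hpt : ∀ t, Tendsto (fun n => A n t) atTop (𝓝 (a t)) := by
    intro t
    have hb : ∃ C', ∀ z : ℕ × Y, |(K z {t}).toReal| ≤ C' := by
      refine ⟨1, fun z => ?_⟩
      rw [abs_of_nonneg ENNReal.toReal_nonneg]
      calc (K z {t}).toReal ≤ (1 : ENNReal).toReal :=
            ENNReal.toReal_mono ENNReal.one_ne_top prob_le_one
        _ = 1 := ENNReal.toReal_one
    have := hweak (fun z => (K z {t}).toReal) (hcont t) hb
    have e1 : (fun n => A n t) = fun n => ∫ z, (K z {t}).toReal ∂(Pn n) :=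
      funext fun n => key (Pn n) t
    rw [e1, show a t = ∫ z, (K z {t}).toReal ∂P from key P t]
    exact this
  -- summability of weighted sums
  have hAφbnd : ∀ (b : ℝ), 0 ≤ b → ∀ t, ‖b * φ t‖ ≤ C * b := by
    intro b hb t
    rw [norm_mul, Real.norm_of_nonneg hb, Real.norm_eq_abs, mul_comm C b]
    exact mul_le_mul_of_nonneg_left (hφC t) hb
  have hAφsum : ∀ n, Summable fun t => A n t * φ t := fun n =>
    Summable.of_norm_bounded ((hAsum n).mul_left C)
      (fun t => hAφbnd _ (hAnn n t) t)
  have haφsum : Summable fun t => a t * φ t :=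
    Summable.of_norm_bounded (hasum.mul_left C)
      (fun t => hAφbnd _ (hann t) t)
  -- reduce to tsums
  rw [show (fun n => ∫ t, φ t ∂((Pn n).bind fun z => K z)) =
      fun n => ∑' t, A n t * φ t from funext fun n => hint _ (hQn n),
    hint _ hQ]
  -- main epsilon argument
  rw [Metric.tendsto_atTop]
  intro ε hε
  set δ : ℝ := ε / (4 * (C + 1)) with hδdef
  have hCpos : (0 : ℝ) < C + 1 := by linarith
  have hδpos : 0 < δ := div_pos hε (by linarith)
  -- choose a finite set carrying most of the mass of `a`
  have hpartial : Tendsto (fun N => ∑ t ∈ Finset.range N, a t) atTop (𝓝 1) := by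
    have := hasum.hasSum.tendsto_sum_nat
    rwa [haone] at this
  obtain ⟨N, hN⟩ := (hpartial.eventually (eventually_gt_nhds (by linarith : 1 - δ < 1))).exists
  set s : Finset ℕ := Finset.range N with hsdef
  set m : ℝ := ∑ t ∈ s, a t with hmdef
  have hm : 1 - δ < m := hN
  have hmle : m ≤ 1 := by
    rw [← haone]
    exact Summable.sum_le_tsum s (fun t _ => hann t) hasum
  -- the two eventual facts
  have hS : Tendsto (fun n => ∑ t ∈ s, A n t * φ t) atTop (𝓝 (∑ t ∈ s, a t * φ t)) :=
    tendsto_finset_sum s (fun t _ => (hpt t).mul tendsto_const_nhds)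
  have hM : Tendsto (fun n => ∑ t ∈ s, A n t) atTop (𝓝 m) :=
    tendsto_finset_sum s (fun t _ => hpt t)
  have hev : ∀ᶠ n in atTop,
      |∑ t ∈ s, A n t * φ t - ∑ t ∈ s, a t * φ t| < δ ∧ m - δ < ∑ t ∈ s, A n t := by
    filter_upwards [hS.eventually (eventually_abs_sub_lt _ hδpos),
      hM.eventually (eventually_gt_nhds (by linarith : m - δ < m))] with n h1 h2
    exact ⟨h1, h2⟩
  obtain ⟨N₀, hN₀⟩ := hev.exists_forall_of_atTop
  refine ⟨N₀, fun n hn => ?_⟩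
  obtain ⟨h1, h2⟩ := hN₀ n hn
  -- tail estimates
  have tail_est : ∀ (b : ℕ → ℝ), (∀ t, 0 ≤ b t) → Summable b → (∑' t, b t) = 1 →
      |∑' t : ↑(↑s : Set ℕ)ᶜ, b t * φ t| ≤ C * (1 - ∑ t ∈ s, b t) := by
    intro b hbnn hbsum hbone
    have hsub : Summable fun t : ↑(↑s : Set ℕ)ᶜ => b t * φ t :=
      ((Summable.of_norm_bounded (hbsum.mul_left C)
        (fun t => hAφbnd _ (hbnn t) t)).subtype _)
    have hnormsub : Summable fun t : ↑(↑s : Set ℕ)ᶜ => ‖b ↑t * φ ↑t‖ := by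
      refine Summable.of_nonneg_of_le (fun t => norm_nonneg _)
        (fun t => hAφbnd _ (hbnn t) t) ?_
      exact ((hbsum.mul_left C).subtype _)
    have htail : (∑' t : ↑(↑s : Set ℕ)ᶜ, b t) = 1 - ∑ t ∈ s, b t := by
      have := Summable.sum_add_tsum_compl (s := s) hbsum
      rw [hbone] at this
      linarith
    calc |∑' t : ↑(↑s : Set ℕ)ᶜ, b t * φ t| ≤ ∑' t : ↑(↑s : Set ℕ)ᶜ, ‖b ↑t * φ ↑t‖ :=
          norm_tsum_le_tsum_norm hnormsub
      _ ≤ ∑' t : ↑(↑s : Set ℕ)ᶜ, C * b ↑t :=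
          Summable.tsum_le_tsum (fun t => hAφbnd _ (hbnn t) t) hnormsub ((hbsum.mul_left C).subtype _)
      _ = C * ∑' t : ↑(↑s : Set ℕ)ᶜ, b ↑t := by rw [tsum_mul_left]
      _ = C * (1 - ∑ t ∈ s, b t) := by rw [htail]
  have hsplitA : (∑' t, A n t * φ t) =
      ∑ t ∈ s, A n t * φ t + ∑' t : ↑(↑s : Set ℕ)ᶜ, A n t * φ t :=
    (Summable.sum_add_tsum_compl (s := s) (hAφsum n)).symm
  have hsplita : (∑' t, a t * φ t) =
      ∑ t ∈ s, a t * φ t + ∑' t : ↑(↑s : Set ℕ)ᶜ, a t * φ t :=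
    (Summable.sum_add_tsum_compl (s := s) haφsum).symm
  have hTnle : |∑' t : ↑(↑s : Set ℕ)ᶜ, A n t * φ t| ≤ C * (1 - ∑ t ∈ s, A n t) :=
    tail_est (A n) (hAnn n) (hAsum n) (hAone n)
  have hTle : |∑' t : ↑(↑s : Set ℕ)ᶜ, a t * φ t| ≤ C * (1 - m) :=
    tail_est a hann hasum haone
  have hAnle : ∑ t ∈ s, A n t ≤ 1 := by
    rw [← hAone n]
    exact Summable.sum_le_tsum s (fun t _ => hAnn n t) (hAsum n)
  rw [Real.dist_eq, hsplitA, hsplita]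
  have habs : |(∑ t ∈ s, A n t * φ t + ∑' t : ↑(↑s : Set ℕ)ᶜ, A n t * φ t) -
      (∑ t ∈ s, a t * φ t + ∑' t : ↑(↑s : Set ℕ)ᶜ, a t * φ t)| ≤
      |∑ t ∈ s, A n t * φ t - ∑ t ∈ s, a t * φ t| +
      |∑' t : ↑(↑s : Set ℕ)ᶜ, A n t * φ t| + |∑' t : ↑(↑s : Set ℕ)ᶜ, a t * φ t| := by
    have := abs_sub (∑' t : ↑(↑s : Set ℕ)ᶜ, A n t * φ t) (∑' t : ↑(↑s : Set ℕ)ᶜ, a t * φ t)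
    calc _ = |(∑ t ∈ s, A n t * φ t - ∑ t ∈ s, a t * φ t) +
          ((∑' t : ↑(↑s : Set ℕ)ᶜ, A n t * φ t) - ∑' t : ↑(↑s : Set ℕ)ᶜ, a t * φ t)| := by
            ring_nf
      _ ≤ _ := by
          refine (abs_add_le _ _).trans ?_
          have := abs_sub_abs_le_abs_sub (∑' t : ↑(↑s : Set ℕ)ᶜ, A n t * φ t)
            (∑' t : ↑(↑s : Set ℕ)ᶜ, a t * φ t)
          have h3 := abs_sub (∑' t : ↑(↑s : Set ℕ)ᶜ, A n t * φ t)
            (∑' t : ↑(↑s : Set ℕ)ᶜ, a t * φ t)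
          linarith [h3]
  have hCδ1 : C * (1 - ∑ t ∈ s, A n t) ≤ C * (2 * δ) := by
    apply mul_le_mul_of_nonneg_left _ hCnn
    linarith
  have hCδ2 : C * (1 - m) ≤ C * δ := by
    apply mul_le_mul_of_nonneg_left _ hCnn
    linarith
  have hδε : δ * (4 * (C + 1)) = ε := by
    rw [hδdef]
    exact div_mul_cancel₀ _ (mul_pos four_pos hCpos).ne'
  calc |(∑ t ∈ s, A n t * φ t + ∑' t : ↑(↑s : Set ℕ)ᶜ, A n t * φ t) -
      (∑ t ∈ s, a t * φ t + ∑' t : ↑(↑s : Set ℕ)ᶜ, a t * φ t)| ≤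
      |∑ t ∈ s, A n t * φ t - ∑ t ∈ s, a t * φ t| +
      |∑' t : ↑(↑s : Set ℕ)ᶜ, A n t * φ t| + |∑' t : ↑(↑s : Set ℕ)ᶜ, a t * φ t| := habs
    _ ≤ δ + C * (2 * δ) + C * δ := by
        have := hTnle.trans hCδ1
        have := hTle.trans hCδ2
        linarith [h1]
    _ < ε := by nlinarith [hδpos, hCnn]
  -- done
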